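/- Let p be a prime and let B_p ⊆ ℤ_p be the ball of radius p^{−k} centered at a rational r/s ∈ ℚ ∩ ℤ_p, and let B_p⁰ be the ball of radius p^{−k} centered at 0. Suppose ψ : ℝ_{>0} → ℝ_{>0} is monotonically decreasing and for every s > 1 there exists c > 0 such that ψ(s·b) > c·ψ(b) for all sufficiently large b. For a ball B ⊆ ℤ_p let W(ψ,B) = {x ∈ ℝ/ℤ : ‖x − (a/n + ℤ)‖ < ψ(n) for infinitely many rationals a/n ∈ B with gcd(a,n) = 1, n ∈ ℕ}, where ‖·‖ denotes the distance to the nearest integer. Then the Haar probability measures of W(ψ, B_p) and W(ψ, B_p⁰) on ℝ/ℤ are equal. -/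

import Mathlib

open MeasureTheory

/-- The set of `x ∈ ℝ/ℤ` with `‖x - (a/n + ℤ)‖ < ψ(n)` (distance to the nearest integer)
for infinitely many reduced rationals `a/n` lying in the `p`-adic ball of radius `p^{-k}`
centered at the rational `c`. -/
def WCirc (p : ℕ) [Fact p.Prime] (k : ℕ) (c : ℚ) (ψ : ℝ → ℝ) : Set UnitAddCircle :=
  {x | {q : ℤ × ℕ | 0 < q.2 ∧ Int.gcd q.1 q.2 = 1 ∧
        ‖((q.1 : ℚ_[p]) / (q.2 : ℚ_[p])) - ((c : ℚ) : ℚ_[p])‖ < (p : ℝ) ^ (-(k : ℤ)) ∧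
        ‖x - (((q.1 : ℝ) / (q.2 : ℝ)) : UnitAddCircle)‖ < ψ (q.2 : ℝ)}.Infinite}

lemma WCirc_subset (p : ℕ) [Fact p.Prime] (k : ℕ) (c₁ c₂ : ℚ) (v : ℤ)
    (hv : ‖((v : ℚ_[p])) - (((c₂ : ℚ) : ℚ_[p]) - ((c₁ : ℚ) : ℚ_[p]))‖ < (p : ℝ) ^ (-(k : ℤ)))
    (ψ : ℝ → ℝ) : WCirc p k c₁ ψ ⊆ WCirc p k c₂ ψ := by
  intro x hx
  have hinj : Function.Injective (fun q : ℤ × ℕ => ((q.1 + (q.2 : ℤ) * v, q.2) : ℤ × ℕ)) :=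
    fun q1 q2 h => by
      simp only [Prod.mk.injEq] at h
      obtain ⟨h1, h2⟩ := h
      rw [h2] at h1
      exact Prod.ext (by omega) h2
  refine Set.Infinite.mono ?_ (Set.Infinite.image hinj.injOn hx)
  rintro _ ⟨⟨a, n⟩, ⟨hn, hgcd, hpad, hcirc⟩, rfl⟩
  refine ⟨hn, ?_, ?_, ?_⟩
  · rw [← Int.isCoprime_iff_gcd_eq_one] at hgcd ⊢
    exact hgcd.add_mul_left_left v
  · have hn0 : ((n : ℚ_[p])) ≠ 0 := by
      exact_mod_cast Nat.cast_ne_zero.mpr hn.ne'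
    have key : (((a + (n : ℤ) * v : ℤ) : ℚ_[p])) / (n : ℚ_[p]) - ((c₂ : ℚ) : ℚ_[p])
        = ((a : ℚ_[p]) / (n : ℚ_[p]) - ((c₁ : ℚ) : ℚ_[p]))
          + (((v : ℚ_[p])) - (((c₂ : ℚ) : ℚ_[p]) - ((c₁ : ℚ) : ℚ_[p]))) := by
      push_cast
      field_simp
      ring
    rw [key]
    exact lt_of_le_of_lt (Padic.nonarchimedean _ _) (max_lt hpad hv)
  · have hnR : ((n : ℝ)) ≠ 0 := Nat.cast_ne_zero.mpr hn.ne'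
    have key : ((((a + (n : ℤ) * v : ℤ) : ℝ) / (n : ℝ) : ℝ) : UnitAddCircle)
        = (((a : ℝ) / (n : ℝ) : ℝ) : UnitAddCircle) := by
      have harith : ((a + (n : ℤ) * v : ℤ) : ℝ) / (n : ℝ) = (a : ℝ) / (n : ℝ) + (v : ℝ) := by
        push_cast; field_simp
      rw [harith]
      have : ((v : ℝ) : UnitAddCircle) = 0 := by
        rw [AddCircle.coe_eq_zero_iff]
        exact ⟨v, by simp⟩
      rw [AddCircle.coe_add, this, add_zero]
    show ‖x - ((((a + (n : ℤ) * v : ℤ) : ℝ) / (n : ℝ) : ℝ) : UnitAddCircle)‖ < ψ (n : ℝ)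
    rw [key]
    exact hcirc

theorem statement9 (p : ℕ) [Fact p.Prime] (k : ℕ) (c : ℚ)
    (hc : ‖(c : ℚ_[p])‖ ≤ 1) (ψ : ℝ → ℝ)
    (hψpos : ∀ x > (0 : ℝ), 0 < ψ x)
    (hψanti : AntitoneOn ψ (Set.Ioi 0))
    (hψreg : ∀ s : ℝ, 1 < s → ∃ c' > (0 : ℝ), ∃ N : ℝ, ∀ x ≥ N, c' * ψ x < ψ (s * x)) :
    volume (WCirc p k c ψ) = volume (WCirc p k 0 ψ) := by
  -- find an integer `v` p-adically within `p^{-k}` of `c`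
  have hε : (0 : ℝ) < (p : ℝ) ^ (-(k : ℤ)) := by
    have : (0 : ℝ) < (p : ℝ) := by exact_mod_cast (Fact.out : p.Prime).pos
    positivity
  set cz : ℤ_[p] := ⟨((c : ℚ) : ℚ_[p]), hc⟩ with hcz
  obtain ⟨v, hv⟩ := Metric.denseRange_iff.mp (PadicInt.denseRange_intCast (p := p)) cz
    _ hε
  have hv' : ‖((v : ℚ_[p])) - ((c : ℚ) : ℚ_[p])‖ < (p : ℝ) ^ (-(k : ℤ)) := by
    have h0 : ‖((v : ℤ_[p]) - cz : ℤ_[p])‖ < (p : ℝ) ^ (-(k : ℤ)) := by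
      rw [← dist_eq_norm, dist_comm]
      exact hv
    rw [PadicInt.norm_def, PadicInt.coe_sub, PadicInt.coe_intCast] at h0
    exact h0
  have h1 : WCirc p k 0 ψ ⊆ WCirc p k c ψ := by
    refine WCirc_subset p k 0 c v ?_ ψ
    simpa using hv'
  have h2 : WCirc p k c ψ ⊆ WCirc p k 0 ψ := by
    refine WCirc_subset p k c 0 (-v) ?_ ψ
    have : ((-v : ℤ) : ℚ_[p]) - (((0 : ℚ) : ℚ_[p]) - ((c : ℚ) : ℚ_[p]))
        = -(((v : ℚ_[p])) - ((c : ℚ) : ℚ_[p])) := by push_cast; ring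
    rw [this, norm_neg]
    exact hv'
  rw [Set.Subset.antisymm h2 h1]
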